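/- Let C be a right triangulated category with shift Σ, and M a rigid subcategory (Hom_C(M, ΣM) = 0) such that Σ restricted to M is fully faithful and such that for every right triangle M0 →f M1 →g X →h ΣM0 with M0, M1 ∈ M, the morphism g is a right M-approximation of X. Then for any such right triangle, the sequence Hom_M(−, M0) → Hom_M(−, M1) → Hom_C(−, X)|_M → 0 of M-modules (contravariant additive functors M → Ab) is exact; in particular Hom_C(−, X)|_M is a finitely presented M-module. -/

import Mathlib

open CategoryTheory CategoryTheory.Limits Opposite ZeroObject

universe v u

/-- A right triangulated category `(C, Σ, ▷)`: an additive category with an additive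
shift endofunctor `Σ` and a class of right triangles `U ⟶ V ⟶ W ⟶ ΣU` satisfying
axioms (RTR0)–(RTR4). -/
structure RightTriangulated (C : Type u) [Category.{v} C] [Preadditive C]
    [HasZeroObject C] where
  /-- the shift functor `Σ` -/
  shift : C ⥤ C
  shift_additive : shift.Additive
  /-- the class of right triangles -/
  IsTri : ∀ ⦃U V W : C⦄, (U ⟶ V) → (V ⟶ W) → (W ⟶ shift.obj U) → Prop
  /-- (RTR0): right triangles are closed under isomorphism of sequences -/
  rtr0 : ∀ ⦃U V W U' V' W' : C⦄ (u : U ⟶ V) (v : V ⟶ W) (w : W ⟶ shift.obj U)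
      (u' : U' ⟶ V') (v' : V' ⟶ W') (w' : W' ⟶ shift.obj U')
      (f : U ≅ U') (g : V ≅ V') (h : W ≅ W'),
      IsTri u v w → u ≫ g.hom = f.hom ≫ u' → v ≫ h.hom = g.hom ≫ v' →
      w ≫ shift.map f.hom = h.hom ≫ w' → IsTri u' v' w'
  /-- (RTR1a): `0 ⟶ U = U ⟶ Σ0` is a right triangle -/
  rtr1_id : ∀ U : C, IsTri (0 : (0 : C) ⟶ U) (𝟙 U) 0
  /-- (RTR1b): every morphism embeds in a right triangle -/
  rtr1_ex : ∀ ⦃U V : C⦄ (u : U ⟶ V), ∃ (W : C) (v : V ⟶ W) (w : W ⟶ shift.obj U),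
      IsTri u v w
  /-- (RTR2): rotation -/
  rtr2 : ∀ ⦃U V W : C⦄ (u : U ⟶ V) (v : V ⟶ W) (w : W ⟶ shift.obj U),
      IsTri u v w → IsTri v w (-shift.map u)
  /-- (RTR3): morphisms of right triangles -/
  rtr3 : ∀ ⦃U V W U' V' W' : C⦄ (u : U ⟶ V) (v : V ⟶ W) (w : W ⟶ shift.obj U)
      (u' : U' ⟶ V') (v' : V' ⟶ W') (w' : W' ⟶ shift.obj U')
      (f : U ⟶ U') (g : V ⟶ V'), IsTri u v w → IsTri u' v' w' →
      u ≫ g = f ≫ u' →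
      ∃ h : W ⟶ W', v ≫ h = g ≫ v' ∧ w ≫ shift.map f = h ≫ w'
  /-- (RTR4): the octahedron axiom -/
  rtr4 : ∀ ⦃U V W U' W' : C⦄ (u : U ⟶ V) (v : V ⟶ W) (w : W ⟶ shift.obj U)
      (u' : U' ⟶ U) (v' : U ⟶ W') (w' : W' ⟶ shift.obj U'),
      IsTri u v w → IsTri u' v' w' →
      ∃ (V' : C) (p : V ⟶ V') (q : V' ⟶ shift.obj U') (f : W' ⟶ V') (g : V' ⟶ W),
        IsTri (u' ≫ u) p q ∧ IsTri f g (w ≫ shift.map v') ∧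
        v' ≫ f = u ≫ p ∧ p ≫ g = v ∧ f ≫ q = w'
universe v' u'

variable {C : Type u} [Category.{v} C] [Preadditive C] [HasZeroObject C]

/-- The full subcategory on a set of objects. -/
abbrev Subcat (𝓜 : Set C) := ObjectProperty.FullSubcategory (fun X : C => X ∈ 𝓜)

/-- The functor `X ↦ Hom_C(−, X)|_𝓜`, the restricted preadditive Yoneda embedding. -/
def resYoneda (𝓜 : Set C) : C ⥤ ((Subcat 𝓜)ᵒᵖ ⥤ AddCommGrpCat.{v}) :=
  preadditiveYoneda ⋙
    (Functor.whiskeringLeft _ _ _).obj (ObjectProperty.ι (fun X : C => X ∈ 𝓜)).op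

/-- A contravariant additive functor `F` (an `M`-module) is finitely presented if it is
the cokernel of a morphism between representable functors, i.e. there are `A B : M`,
`h : A ⟶ B` and `π : Hom(−,B) ⟶ F` such that
`Hom(−,A) ⟶ Hom(−,B) ⟶ F ⟶ 0` is exact. -/
def FinPres {M : Type u'} [Category.{v'} M] [Preadditive M]
    (F : Mᵒᵖ ⥤ AddCommGrpCat.{v'}) : Prop :=
  ∃ (A B : M) (h : A ⟶ B) (π : preadditiveYoneda.obj B ⟶ F),
    (∀ m : M, Function.Surjective (π.app (op m))) ∧
    (∀ (m : M) (x : (preadditiveYoneda.obj B).obj (op m)),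
      π.app (op m) x = 0 ↔ ∃ y, (preadditiveYoneda.map h).app (op m) y = x)

/-- `mod M`: the category of finitely presented contravariant additive functors
`M → Ab`. -/
abbrev ModCat (M : Type u') [Category.{v'} M] [Preadditive M] :=
  ObjectProperty.FullSubcategory (fun F : Mᵒᵖ ⥤ AddCommGrpCat.{v'} => F.Additive ∧ FinPres F)

/-- In a right triangle the composition of the first two morphisms vanishes. -/
lemma tri_comp_zero (T : RightTriangulated C) {U V W : C} (u : U ⟶ V) (v : V ⟶ W)
    (w : W ⟶ T.shift.obj U) (hT : T.IsTri u v w) : u ≫ v = 0 := by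
  have h1 := T.rtr2 _ _ _ (T.rtr1_id U)
  obtain ⟨k, hk1, -⟩ := T.rtr3 _ _ _ u v w (𝟙 U) u h1 hT (by simp)
  simpa using hk1.symm

/-- Exactness in the middle: a morphism from `m ∈ 𝓜` to `M1` killed by `g`
factors through `f`. -/
lemma tri_exact (T : RightTriangulated C) (𝓜 : Set C)
    (RC1 : ∀ ⦃m m' : C⦄, m ∈ 𝓜 → m' ∈ 𝓜 →
      Function.Bijective (fun φ : m ⟶ m' => T.shift.map φ))
    {M0 M1 X : C} (hM0 : M0 ∈ 𝓜) (hM1 : M1 ∈ 𝓜)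
    (f : M0 ⟶ M1) (g : M1 ⟶ X) (h : X ⟶ T.shift.obj M0) (hT : T.IsTri f g h)
    {m : C} (hm : m ∈ 𝓜) (t : m ⟶ M1) (ht : t ≫ g = 0) :
    ∃ y : m ⟶ M0, y ≫ f = t := by
  obtain ⟨W, a, b, hW⟩ := T.rtr1_ex t
  obtain ⟨r, hr1, -⟩ := T.rtr3 t a b (0 : (0 : C) ⟶ X) (𝟙 X) 0 0 g hW (T.rtr1_id X)
    (by simp [ht])
  have hW' := T.rtr2 _ _ _ hW
  have hT' := T.rtr2 _ _ _ hT
  obtain ⟨k, -, hk2⟩ := T.rtr3 a b (-T.shift.map t) g h (-T.shift.map f) (𝟙 M1) r hW' hT'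
    (by simpa using hr1)
  obtain ⟨φ, hφ⟩ := (RC1 hm hM0).2 k
  refine ⟨φ, (RC1 hm hM1).1 ?_⟩
  have hk : T.shift.map t = k ≫ T.shift.map f := by
    have := hk2
    simp only [Functor.map_id, Category.comp_id, Preadditive.neg_comp,
      Preadditive.comp_neg, neg_inj] at this
    simpa using this
  simp only [Functor.map_comp, hφ, ← hk]

/-- Let `C` be a right triangulated category and `𝓜` a rigid
subcategory satisfying (RC1) and (RC2).  Then for any right triangle
`M0 ⟶f M1 ⟶g X ⟶h ΣM0` with `M0, M1 ∈ 𝓜`, the sequence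
`Hom_𝓜(−,M0) ⟶ Hom_𝓜(−,M1) ⟶ Hom_C(−,X)|_𝓜 ⟶ 0` of `𝓜`-modules is exact;
in particular `Hom_C(−,X)|_𝓜` is a finitely presented `𝓜`-module. -/
theorem stmt6 (T : RightTriangulated C) (𝓜 : Set C)
    (rigid : ∀ ⦃m m' : C⦄, m ∈ 𝓜 → m' ∈ 𝓜 → ∀ φ : m ⟶ T.shift.obj m', φ = 0)
    (RC1 : ∀ ⦃m m' : C⦄, m ∈ 𝓜 → m' ∈ 𝓜 →
      Function.Bijective (fun φ : m ⟶ m' => T.shift.map φ))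
    (RC2 : ∀ ⦃M0 M1 X : C⦄, M0 ∈ 𝓜 → M1 ∈ 𝓜 →
      ∀ (f : M0 ⟶ M1) (g : M1 ⟶ X) (h : X ⟶ T.shift.obj M0), T.IsTri f g h →
      ∀ ⦃m : C⦄, m ∈ 𝓜 → ∀ t : m ⟶ X, ∃ s : m ⟶ M1, s ≫ g = t)
    {M0 M1 X : C} (hM0 : M0 ∈ 𝓜) (hM1 : M1 ∈ 𝓜)
    (f : M0 ⟶ M1) (g : M1 ⟶ X) (h : X ⟶ T.shift.obj M0) (hT : T.IsTri f g h) :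
    (∀ m : Subcat 𝓜, Function.Surjective (((resYoneda 𝓜).map g).app (op m))) ∧
    (∀ (m : Subcat 𝓜) (x : ((resYoneda 𝓜).obj M1).obj (op m)),
      ((resYoneda 𝓜).map g).app (op m) x = 0 ↔
        ∃ y, ((resYoneda 𝓜).map f).app (op m) y = x) ∧
    FinPres ((resYoneda 𝓜).obj X) := by
  have surj : ∀ m : Subcat 𝓜, Function.Surjective (((resYoneda 𝓜).map g).app (op m)) := by
    intro m t
    obtain ⟨s, hs⟩ := RC2 hM0 hM1 f g h hT m.property t
    exact ⟨s, hs⟩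
  have ex : ∀ (m : Subcat 𝓜) (x : ((resYoneda 𝓜).obj M1).obj (op m)),
      ((resYoneda 𝓜).map g).app (op m) x = 0 ↔
        ∃ y, ((resYoneda 𝓜).map f).app (op m) y = x := by
    intro m x
    constructor
    · intro hx
      exact tri_exact T 𝓜 RC1 hM0 hM1 f g h hT m.property x hx
    · rintro ⟨y, rfl⟩
      have key : ∀ z : m.obj ⟶ M0, (z ≫ f) ≫ g = 0 := fun z => by
        rw [Category.assoc, tri_comp_zero T f g h hT, Limits.comp_zero]
      exact key y
  let π : preadditiveYoneda.obj (⟨M1, hM1⟩ : Subcat 𝓜) ⟶ (resYoneda 𝓜).obj X :=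
    { app := fun m =>
        have e : (unop m ⟶ (⟨M1, hM1⟩ : Subcat 𝓜)) ≃+ ((unop m).obj ⟶ M1) :=
          InducedCategory.homAddEquiv
        AddCommGrpCat.ofHom
        { toFun := fun x => e x ≫ g
          map_zero' := (congrArg (· ≫ g) e.map_zero).trans Limits.zero_comp
          map_add' := fun a b => (congrArg (· ≫ g) (e.map_add a b)).trans
            (Preadditive.add_comp _ _ _ _ _ _) }
      naturality := by
        intro a b k
        ext x
        exact Category.assoc k.unop.hom x.hom g }
  refine ⟨surj, ex, ⟨⟨M0, hM0⟩, ⟨M1, hM1⟩, ObjectProperty.homMk f, π, ?_, ?_⟩⟩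
  · intro m t
    obtain ⟨s, hs⟩ := surj m t
    exact ⟨ObjectProperty.homMk s, hs⟩
  · intro m x
    have := (ex m x.hom).1
    constructor
    · intro hx
      obtain ⟨y, hy⟩ := this hx
      refine ⟨ObjectProperty.homMk y, ?_⟩
      apply InducedCategory.hom_ext
      exact hy
    · rintro ⟨y, rfl⟩
      exact (ex m _).2 ⟨y.hom, rfl⟩
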